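/- Let n be a positive integer, τ = i·√n ∈ ℂ, and k = ℚ(τ) ⊆ ℂ (an imaginary quadratic field). Let Γ ⊆ k² ⊆ ℂ² be an additive subgroup that is free of rank 3 and discrete in ℂ². Then there exist a one-dimensional complex linear subspace L ⊆ ℂ² and an element γ₀ ∈ Γ such that: L ∩ Γ is free of rank 2; Γ is the internal direct sum of L ∩ Γ and ℤ·γ₀ (every γ ∈ Γ is uniquely γ' + m·γ₀ with γ' ∈ L ∩ Γ and m ∈ ℤ); and for some (equivalently, any) ℂ-linear isomorphism φ : L → ℂ there exists μ ∈ ℂ, μ ≠ 0, with μ·φ(L ∩ Γ) ⊆ ℤ + ℤ·τ. -/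

import Mathlib

set_option maxHeartbeats 1000000


-- τ² = -n
theorem aux_tau_sq (n : ℕ) (τ : ℂ) (hτ : τ = Complex.I * Real.sqrt n) : τ * τ = -(n : ℂ) := by
  subst hτ
  have h : (Real.sqrt n : ℂ) * (Real.sqrt n : ℂ) = ((Real.sqrt n * Real.sqrt n : ℝ) : ℂ) := by
    push_cast; ring
  have h2 : Real.sqrt n * Real.sqrt n = (n : ℝ) :=
    Real.mul_self_sqrt (by positivity)
  calc Complex.I * Real.sqrt n * (Complex.I * Real.sqrt n)
      = (Complex.I * Complex.I) * ((Real.sqrt n : ℂ) * (Real.sqrt n : ℂ)) := by ring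
    _ = -(n : ℂ) := by rw [Complex.I_mul_I, h, h2]; push_cast; ring

-- independence of 1, τ over ℚ
theorem aux_indep (n : ℕ) (hn : 0 < n) (τ : ℂ) (hτ : τ = Complex.I * Real.sqrt n) (a b : ℚ) (h : (a : ℂ) + (b : ℂ) * τ = 0) : a = 0 ∧ b = 0 := by
  subst hτ
  have him := congrArg Complex.im h
  have hre := congrArg Complex.re h
  simp [Complex.add_im, Complex.mul_im, Complex.mul_re] at him hre
  rcases him with him | him
  · exact ⟨by exact_mod_cast hre, by exact_mod_cast him⟩
  · omega

-- membership characterization of ℚ(τ)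
theorem aux_mem_adjoin (n : ℕ) (τ : ℂ) (hτ2 : τ * τ = -(n : ℂ)) (z : ℂ)
    (hz : z ∈ IntermediateField.adjoin ℚ ({τ} : Set ℂ)) :
    ∃ a b : ℚ, z = (a : ℂ) + (b : ℂ) * τ := by
  have hint : IsIntegral ℚ τ := by
    refine ⟨Polynomial.X ^ 2 + Polynomial.C (n : ℚ), ?_, ?_⟩
    · apply Polynomial.monic_X_pow_add_C
      norm_num
    · simp [Polynomial.eval₂, sq, hτ2]
  -- the subalgebra of elements of the form a + bτ
  let S : Subalgebra ℚ ℂ :=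
  { carrier := {z | ∃ a b : ℚ, z = (a : ℂ) + (b : ℂ) * τ}
    mul_mem' := by
      rintro x y ⟨a, b, rfl⟩ ⟨c, d, rfl⟩
      refine ⟨a * c - n * b * d, a * d + b * c, ?_⟩
      push_cast
      have : (a : ℂ) * c + (a * d + b * c) * τ + b * d * (τ * τ)
          = ((a : ℂ) + b * τ) * ((c : ℂ) + d * τ) := by ring
      rw [hτ2] at this
      rw [← this]; push_cast; ring
    add_mem' := by
      rintro x y ⟨a, b, rfl⟩ ⟨c, d, rfl⟩
      exact ⟨a + c, b + d, by push_cast; ring⟩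
    algebraMap_mem' := fun q => ⟨q, 0, by push_cast; ring_nf; rfl⟩ }
  have hτS : τ ∈ S := ⟨0, 1, by push_cast; ring⟩
  have hle : Algebra.adjoin ℚ ({τ} : Set ℂ) ≤ S :=
    Algebra.adjoin_le (by simpa using hτS)
  have h1 : z ∈ (IntermediateField.adjoin ℚ ({τ} : Set ℂ)).toSubalgebra := hz
  rw [IntermediateField.adjoin_simple_toSubalgebra_of_isAlgebraic hint.isAlgebraic] at h1
  exact hle h1

theorem aux_inK_mul (n : ℕ) (τ : ℂ) (hτ2 : τ * τ = -(n : ℂ)) (x y : ℂ)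
    (hx : ∃ a b : ℚ, x = (a : ℂ) + (b : ℂ) * τ) (hy : ∃ a b : ℚ, y = (a : ℂ) + (b : ℂ) * τ) :
    ∃ a b : ℚ, x * y = (a : ℂ) + (b : ℂ) * τ := by
  obtain ⟨a, b, rfl⟩ := hx
  obtain ⟨c, d, rfl⟩ := hy
  refine ⟨a * c - n * b * d, a * d + b * c, ?_⟩
  have : ((a : ℂ) + b * τ) * ((c : ℂ) + d * τ)
      = (a : ℂ) * c + ((a : ℂ) * d + b * c) * τ + (b : ℂ) * d * (τ * τ) := by ring
  rw [this, hτ2]; push_cast; ring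

theorem aux_inK_inv (n : ℕ) (hn : 0 < n) (τ : ℂ) (hτ : τ = Complex.I * Real.sqrt n)
    (x : ℂ) (hx0 : x ≠ 0) (hx : ∃ a b : ℚ, x = (a : ℂ) + (b : ℂ) * τ) :
    ∃ a b : ℚ, x⁻¹ = (a : ℂ) + (b : ℂ) * τ := by
  have hτ2 := aux_tau_sq n τ hτ
  obtain ⟨a, b, rfl⟩ := hx
  set s : ℚ := a ^ 2 + n * b ^ 2 with hs
  have hab : ¬(a = 0 ∧ b = 0) := by
    rintro ⟨rfl, rfl⟩; simp at hx0
  have hs0 : s ≠ 0 := by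
    rcases (not_and_or.mp hab) with h | h
    · have : (0:ℚ) < a ^ 2 := by positivity
      have : (0:ℚ) ≤ (n : ℚ) * b ^ 2 := by positivity
      nlinarith
    · have hb : (0:ℚ) < b ^ 2 := by positivity
      have hn' : (1:ℚ) ≤ (n : ℚ) := by exact_mod_cast hn
      nlinarith
  refine ⟨a / s, -b / s, ?_⟩
  refine inv_eq_of_mul_eq_one_right ?_
  have hsC : ((s : ℚ) : ℂ) ≠ 0 := by exact_mod_cast hs0
  have key : ((a : ℂ) + b * τ) * ((a : ℂ) - b * τ) = (s : ℂ) := by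
    have : ((a : ℂ) + b * τ) * ((a : ℂ) - b * τ) = (a:ℂ)^2 - (b:ℂ)^2 * (τ * τ) := by ring
    rw [this, hτ2, hs]; push_cast; ring
  have : ((a : ℂ) + b * τ) * (((a / s : ℚ) : ℂ) + ((-b / s : ℚ) : ℂ) * τ)
      = (((a : ℂ) + b * τ) * ((a : ℂ) - b * τ)) / (s : ℂ) := by
    push_cast; ring
  rw [this, key, div_self hsC]


theorem aux_split {G : Type*} [AddCommGroup G] (b : Module.Basis (Fin 3) ℤ G)
    (N : Submodule ℤ G) (bN0 : Module.Basis (Fin 2) ℤ N)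
    (hsat : ∀ (c : ℤ) (g : G), c ≠ 0 → c • g ∈ N → g ∈ N) :
    ∃ γ₀ : G, ∀ g : G, ∃! q : N × ℤ, (q.1 : G) + q.2 • γ₀ = g := by
  obtain ⟨m, snf⟩ := N.smithNormalForm b
  -- m = 2
  have hm : m = 2 := by
    have e := snf.bN.indexEquiv bN0
    simpa using Fintype.card_congr e
  subst hm
  -- basis vectors of M at f i are in N
  have ha : ∀ i, snf.a i ≠ 0 := by
    intro i hai
    have h0 := snf.snf i
    rw [hai, zero_smul] at h0
    exact snf.bN.ne_zero i (Subtype.ext h0)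
  have hfN : ∀ i, snf.bM (snf.f i) ∈ N := by
    intro i
    refine hsat (snf.a i) _ (ha i) ?_
    rw [← snf.snf i]; exact (snf.bN i).2
  -- find the index not in range f
  have hnotsurj : ¬ Function.Surjective snf.f := by
    intro h
    have := Fintype.card_le_of_surjective snf.f h
    simp at this
  rw [Function.Surjective] at hnotsurj
  push_neg at hnotsurj
  obtain ⟨i₂, hi₂⟩ := hnotsurj
  have hi₂' : i₂ ∉ Set.range snf.f := by
    rintro ⟨j, rfl⟩; exact hi₂ j rfl
  -- every other index is in range f
  have hmem : ∀ i : Fin 3, i ≠ i₂ → snf.bM i ∈ N := by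
    intro i hi
    have hrange : ∃ j, snf.f j = i := by
      by_contra hc
      push_neg at hc
      have h1 : i ∉ Set.range snf.f := by rintro ⟨j, rfl⟩; exact hc j rfl
      have hsub : ({i, i₂} : Finset (Fin 3)) ⊆ (Finset.univ.map snf.f)ᶜ := by
        intro x hx
        simp only [Finset.mem_insert, Finset.mem_singleton] at hx
        rcases hx with rfl | rfl <;> simp only [Finset.mem_compl, Finset.mem_map,
          Finset.mem_univ, true_and, not_exists]
        · intro j hj; exact h1 ⟨j, hj⟩
        · intro j hj; exact hi₂' ⟨j, hj⟩
      have hcard : ({i, i₂} : Finset (Fin 3)).card = 2 := by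
        rw [Finset.card_insert_of_notMem (by simpa using hi), Finset.card_singleton]
      have hcard2 : ((Finset.univ.map snf.f)ᶜ : Finset (Fin 3)).card = 1 := by
        rw [Finset.card_compl]; simp
      have := Finset.card_le_card hsub
      omega
    obtain ⟨j, rfl⟩ := hrange
    exact hfN j
  refine ⟨snf.bM i₂, fun g => ?_⟩
  set cg := snf.bM.repr g with hcg
  have hn'mem : g - cg i₂ • snf.bM i₂ ∈ N := by
    have hg : g = ∑ i, cg i • snf.bM i := (snf.bM.sum_repr g).symm
    have hsplit : ∑ i, cg i • snf.bM i
        = cg i₂ • snf.bM i₂ + ∑ i ∈ Finset.univ.erase i₂,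
          cg i • snf.bM i :=
      (Finset.add_sum_erase _ _ (Finset.mem_univ i₂)).symm
    have : g - cg i₂ • snf.bM i₂
        = ∑ i ∈ Finset.univ.erase i₂, cg i • snf.bM i := by
      conv_lhs => rw [hg, hsplit]
      abel
    rw [this]
    refine Submodule.sum_mem N fun i hi => ?_
    exact Submodule.smul_mem N _ (hmem i (Finset.ne_of_mem_erase hi))
  refine ⟨⟨⟨_, hn'mem⟩, cg i₂⟩, by simp, ?_⟩
  rintro ⟨p, c⟩ hpc
  simp only at hpc
  -- repr of p at i₂ is zero
  have hp0 : snf.bM.repr (p : G) i₂ = 0 := snf.repr_eq_zero_of_notMem_range p hi₂'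
  have hc : c = cg i₂ := by
    have := congrArg (fun x => snf.bM.repr x i₂) hpc
    simp only [map_add, map_zsmul, Finsupp.coe_add, Finsupp.coe_smul, Pi.add_apply,
      Pi.smul_apply, hp0, Module.Basis.repr_self, Finsupp.single_eq_same, smul_eq_mul,
      mul_one, zero_add] at this
    exact this
  have hp : (p : G) = g - cg i₂ • snf.bM i₂ := by
    rw [← hc]; exact eq_sub_of_add_eq hpc
  refine Prod.ext (Subtype.ext ?_) hc
  exact hp

open Module Submodule in
/-- If `Γ ⊆ k²` is a discrete rank-3 subgroup of `ℂ²` with coordinates in the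
imaginary quadratic field `k = ℚ(τ)`, `τ = i√n`, then `Γ` splits as the direct sum of a
rank-2 lattice on a complex line `L` (defining an elliptic curve isogenous to
`ℂ/(ℤ + ℤτ)`) and an infinite cyclic group. -/
theorem quadratic_field_splitting
    (n : ℕ) (hn : 0 < n) (τ : ℂ) (hτ : τ = Complex.I * Real.sqrt n)
    (Γ : AddSubgroup (ℂ × ℂ))
    (hΓk : ∀ γ ∈ Γ, γ.1 ∈ IntermediateField.adjoin ℚ ({τ} : Set ℂ) ∧
      γ.2 ∈ IntermediateField.adjoin ℚ ({τ} : Set ℂ))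
    (hdisc : DiscreteTopology Γ)
    (hfree : Nonempty (Basis (Fin 3) ℤ Γ)) :
    ∃ (L : Submodule ℂ (ℂ × ℂ)) (γ₀ : ℂ × ℂ), Module.finrank ℂ L = 1 ∧ γ₀ ∈ Γ ∧
      Nonempty (Basis (Fin 2) ℤ ((L.toAddSubgroup ⊓ Γ : AddSubgroup (ℂ × ℂ)))) ∧
      (∀ γ ∈ Γ, ∃! q : (L.toAddSubgroup ⊓ Γ : AddSubgroup (ℂ × ℂ)) × ℤ,
        (q.1 : ℂ × ℂ) + q.2 • γ₀ = γ) ∧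
      (∀ φ : L ≃ₗ[ℂ] ℂ, ∃ μ : ℂ, μ ≠ 0 ∧
        ∀ v : L, (v : ℂ × ℂ) ∈ Γ → ∃ a b : ℤ, μ * φ v = (a : ℂ) + (b : ℂ) * τ) := by
  classical
  obtain ⟨b⟩ := hfree
  have hτ2 : τ * τ = -(n : ℂ) := aux_tau_sq n τ hτ
  have hτ0 : τ ≠ 0 := by
    intro h; rw [h] at hτ2; simp at hτ2; omega
  have hindep : ∀ a b : ℚ, (a : ℂ) + (b : ℂ) * τ = 0 → a = 0 ∧ b = 0 :=
    aux_indep n hn τ hτ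
  have hQsmul : ∀ (q : ℚ) (x : ℂ × ℂ), (q : ℂ) • x = q • x := by
    intro q x
    rw [← algebraMap_smul (A := ℂ) (R := ℚ)]; norm_num
  have hZsmul : ∀ (c : ℤ) (x : ℂ × ℂ), ((c : ℂ)) • x = c • x :=
    fun c x => Int.cast_smul_eq_zsmul ℂ c x
  have hZQsmul : ∀ (c : ℤ) (x : ℂ × ℂ), ((c : ℚ)) • x = c • x :=
    fun c x => Int.cast_smul_eq_zsmul ℚ c x
  -- the inclusion of Γ
  set ι : Γ →ₗ[ℤ] (ℂ × ℂ) := Γ.subtype.toIntLinearMap with hι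
  have hιinj : Function.Injective ι := Subtype.val_injective
  set g : Fin 3 → ℂ × ℂ := fun i => ((b i : Γ) : ℂ × ℂ) with hg
  have hgΓ : ∀ i, g i ∈ Γ := fun i => (b i : Γ).2
  have hlinZ : LinearIndependent ℤ g := by
    have := b.linearIndependent.map' ι (LinearMap.ker_eq_bot.mpr hιinj)
    exact this
  have hlinQ : LinearIndependent ℚ g := by
    rw [← LinearIndependent.iff_fractionRing ℤ ℚ]; exact hlinZ
  -- V = ℚ-span of Γ
  set V : Submodule ℚ (ℂ × ℂ) := span ℚ (Set.range g) with hV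
  haveI : FiniteDimensional ℚ V := FiniteDimensional.span_of_finite ℚ (Set.finite_range g)
  have hVrank : finrank ℚ V = 3 := by
    rw [hV, finrank_span_eq_card hlinQ]; simp
  have hΓV : ∀ x ∈ Γ, x ∈ V := by
    intro x hx
    have hrg : Set.range g = ι '' Set.range b := by
      rw [← Set.range_comp]; rfl
    have hx2 : x ∈ span ℤ (Set.range g) := by
      rw [hrg, ← Submodule.map_span, b.span_eq]
      exact ⟨⟨x, hx⟩, trivial, rfl⟩
    exact Submodule.span_subset_span ℤ ℚ _ hx2
  have hVscale : ∀ z ∈ V, ∃ c : ℤ, c ≠ 0 ∧ c • z ∈ Γ := by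
    intro z hz
    obtain ⟨c, hc⟩ := (mem_span_range_iff_exists_fun ℚ).mp hz
    refine ⟨((c 0).den : ℤ) * ((c 1).den : ℤ) * ((c 2).den : ℤ), by positivity, ?_⟩
    set d : ℤ := ((c 0).den : ℤ) * ((c 1).den : ℤ) * ((c 2).den : ℤ) with hd
    have he : ∀ i : Fin 3, ∃ e : ℤ, ((e : ℚ)) = (d : ℚ) * c i := by
      intro i
      fin_cases i
      · refine ⟨(c 0).num * (((c 1).den : ℤ) * ((c 2).den : ℤ)), ?_⟩
        have h0 := Rat.mul_den_eq_num (c 0)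
        push_cast [hd]
        linear_combination (-(((c 1).den : ℚ) * ((c 2).den : ℚ))) * h0
      · refine ⟨(c 1).num * (((c 0).den : ℤ) * ((c 2).den : ℤ)), ?_⟩
        have h0 := Rat.mul_den_eq_num (c 1)
        push_cast [hd]
        linear_combination (-(((c 0).den : ℚ) * ((c 2).den : ℚ))) * h0
      · refine ⟨(c 2).num * (((c 0).den : ℤ) * ((c 1).den : ℤ)), ?_⟩
        have h0 := Rat.mul_den_eq_num (c 2)
        push_cast [hd]
        linear_combination (-(((c 0).den : ℚ) * ((c 1).den : ℚ))) * h0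
    choose e hee using he
    have : d • z = ∑ i, e i • g i := by
      rw [← hZQsmul, ← hc, Finset.smul_sum]
      refine Finset.sum_congr rfl fun i _ => ?_
      rw [← hZQsmul, smul_smul, ← hee i]
    rw [this]
    exact AddSubgroup.sum_mem Γ fun i _ => AddSubgroup.zsmul_mem Γ (hgΓ i) _
  -- multiplication by τ as ℚ-linear equivalence
  set Te : (ℂ × ℂ) ≃ₗ[ℚ] (ℂ × ℂ) :=
  { toFun := fun v => τ • v
    map_add' := fun x y => smul_add τ x y
    map_smul' := fun q v => (smul_comm q τ v).symm
    invFun := fun v => τ⁻¹ • v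
    left_inv := fun v => inv_smul_smul₀ hτ0 v
    right_inv := fun v => smul_inv_smul₀ hτ0 v } with hTe
  -- the subgroup lives in the 4-dimensional ℚ-space k²
  set W : Submodule ℚ (ℂ × ℂ) :=
  { carrier := {v | (∃ a b : ℚ, v.1 = (a : ℂ) + (b : ℂ) * τ) ∧
      (∃ a b : ℚ, v.2 = (a : ℂ) + (b : ℂ) * τ)}
    add_mem' := by
      rintro x y ⟨⟨a, b, hx1⟩, ⟨c, d, hx2⟩⟩ ⟨⟨a', b', hy1⟩, ⟨c', d', hy2⟩⟩
      constructor
      · exact ⟨a + a', b + b', by rw [Prod.fst_add, hx1, hy1]; push_cast; ring⟩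
      · exact ⟨c + c', d + d', by rw [Prod.snd_add, hx2, hy2]; push_cast; ring⟩
    zero_mem' := ⟨⟨0, 0, by simp⟩, ⟨0, 0, by simp⟩⟩
    smul_mem' := by
      rintro q x ⟨⟨a, b, hx1⟩, ⟨c, d, hx2⟩⟩
      constructor
      · refine ⟨q * a, q * b, ?_⟩
        rw [Prod.smul_fst, hx1, Rat.smul_def]; push_cast; ring
      · refine ⟨q * c, q * d, ?_⟩
        rw [Prod.smul_snd, hx2, Rat.smul_def]; push_cast; ring } with hW
  have hmemW : ∀ v : ℂ × ℂ, v ∈ W ↔ ((∃ a b : ℚ, v.1 = (a : ℂ) + (b : ℂ) * τ) ∧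
      (∃ a b : ℚ, v.2 = (a : ℂ) + (b : ℂ) * τ)) := fun v => Iff.rfl
  have hΓW : ∀ x ∈ Γ, x ∈ W := by
    intro x hx
    obtain ⟨h1, h2⟩ := hΓk x hx
    exact ⟨aux_mem_adjoin n τ hτ2 _ h1, aux_mem_adjoin n τ hτ2 _ h2⟩
  have hVW : V ≤ W := by
    rw [hV, span_le]
    rintro x ⟨i, rfl⟩
    exact hΓW _ (hgΓ i)
  -- W is at most 4-dimensional
  have hWle : W ≤ span ℚ (Set.range ![((1:ℂ),(0:ℂ)), (τ,0), (0,1), (0,τ)]) := by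
    rintro v ⟨⟨a, b, h1⟩, ⟨c, d, h2⟩⟩
    have hv : v = a • ((1:ℂ),(0:ℂ)) + b • ((τ,0) : ℂ × ℂ)
        + c • ((0,1) : ℂ × ℂ) + d • ((0,τ) : ℂ × ℂ) := by
      refine Prod.ext ?_ ?_
      · simp only [Prod.fst_add, Prod.smul_fst, Rat.smul_def]
        rw [h1]; push_cast; ring
      · simp only [Prod.snd_add, Prod.smul_snd, Rat.smul_def]
        rw [h2]; push_cast; ring
    rw [hv]
    have h0 : ((1:ℂ),(0:ℂ)) ∈ Set.range ![((1:ℂ),(0:ℂ)), (τ,0), (0,1), (0,τ)] := ⟨0, rfl⟩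
    have h1' : ((τ,0) : ℂ × ℂ) ∈ Set.range ![((1:ℂ),(0:ℂ)), (τ,0), (0,1), (0,τ)] := ⟨1, rfl⟩
    have h2' : ((0,1) : ℂ × ℂ) ∈ Set.range ![((1:ℂ),(0:ℂ)), (τ,0), (0,1), (0,τ)] := ⟨2, rfl⟩
    have h3' : ((0,τ) : ℂ × ℂ) ∈ Set.range ![((1:ℂ),(0:ℂ)), (τ,0), (0,1), (0,τ)] := ⟨3, rfl⟩
    exact add_mem (add_mem (add_mem (smul_mem _ _ (subset_span h0)) (smul_mem _ _ (subset_span h1')))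
      (smul_mem _ _ (subset_span h2'))) (smul_mem _ _ (subset_span h3'))
  haveI : FiniteDimensional ℚ (span ℚ (Set.range ![((1:ℂ),(0:ℂ)), (τ,0), (0,1), (0,τ)])) :=
    FiniteDimensional.span_of_finite ℚ (Set.finite_range _)
  haveI hWfd : FiniteDimensional ℚ W := Submodule.finiteDimensional_of_le hWle
  have hWrank : finrank ℚ W ≤ 4 := by
    refine (Submodule.finrank_mono hWle).trans ?_
    refine (finrank_span_le_card (R := ℚ) _).trans ?_
    rw [Set.toFinset_range]
    refine le_trans Finset.card_image_le ?_
    simp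
  -- V' = τ⁻¹ V
  set V' : Submodule ℚ (ℂ × ℂ) := V.map (Te.symm : (ℂ × ℂ) →ₗ[ℚ] (ℂ × ℂ)) with hV'
  haveI : FiniteDimensional ℚ V' := Module.Finite.map _ _
  have hmemV' : ∀ x : ℂ × ℂ, x ∈ V' ↔ τ • x ∈ V := by
    intro x
    rw [hV']
    constructor
    · rintro ⟨y, hy, rfl⟩
      show τ • (τ⁻¹ • y) ∈ V
      rw [smul_inv_smul₀ hτ0]
      exact hy
    · intro h
      refine ⟨τ • x, h, ?_⟩
      show τ⁻¹ • (τ • x) = x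
      rw [inv_smul_smul₀ hτ0]
  have hV'rank : finrank ℚ V' = 3 := by
    rw [hV']
    rw [LinearEquiv.finrank_map_eq Te.symm V]
    exact hVrank
  have hV'W : V' ≤ W := by
    intro x hx
    rw [hmemV' x] at hx
    obtain ⟨⟨a, b, h1⟩, ⟨c, d, h2⟩⟩ := hVW hx
    rw [Prod.smul_fst, smul_eq_mul] at h1
    rw [Prod.smul_snd, smul_eq_mul] at h2
    have hnQ : ((n:ℚ)) ≠ 0 := by positivity
    constructor
    · set a' : ℚ := -a/n with ha'
      have hna : ((n:ℂ)) * ((a' : ℚ) : ℂ) = -(a:ℂ) := by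
        have : ((n:ℚ)) * a' = -a := by rw [ha']; field_simp
        exact_mod_cast this
      refine ⟨b, a', mul_left_cancel₀ hτ0 ?_⟩
      rw [h1]
      linear_combination (-((a' : ℚ) : ℂ)) * hτ2 + hna
    · set c' : ℚ := -c/n with hc'
      have hna : ((n:ℂ)) * ((c' : ℚ) : ℂ) = -(c:ℂ) := by
        have : ((n:ℚ)) * c' = -c := by rw [hc']; field_simp
        exact_mod_cast this
      refine ⟨d, c', mul_left_cancel₀ hτ0 ?_⟩
      rw [h2]
      linear_combination (-((c' : ℚ) : ℂ)) * hτ2 + hna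
  -- a nonzero vector u with u ∈ V and τ • u ∈ V
  have hsup : finrank ℚ (V ⊔ V' : Submodule ℚ (ℂ × ℂ)) ≤ 4 :=
    le_trans (Submodule.finrank_mono (sup_le hVW hV'W)) hWrank
  have hinf2 : 0 < finrank ℚ (V ⊓ V' : Submodule ℚ (ℂ × ℂ)) := by
    have h := Submodule.finrank_sup_add_finrank_inf_eq V V'
    rw [hVrank, hV'rank] at h
    omega
  have hne : ∃ u, u ∈ V ⊓ V' ∧ u ≠ 0 := by
    by_contra hc
    push_neg at hc
    have hbot : (V ⊓ V' : Submodule ℚ (ℂ × ℂ)) = ⊥ := by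
      rw [eq_bot_iff]
      intro x hx
      by_contra hx0
      exact hx0 (hc x hx)
    rw [hbot] at hinf2
    simp [finrank_bot] at hinf2
  obtain ⟨u, huVV', hu0⟩ := hne
  have huV : u ∈ V := huVV'.1
  have huτV : τ • u ∈ V := (hmemV' u).mp huVV'.2
  -- the complex line L
  set L : Submodule ℂ (ℂ × ℂ) := span ℂ ({u} : Set (ℂ × ℂ)) with hL
  have hLrank : finrank ℂ L = 1 := finrank_span_singleton hu0
  have huL : u ∈ L := Submodule.mem_span_singleton_self u
  have hτuL : τ • u ∈ L := L.smul_mem τ huL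
  -- key: elements of L with coordinates in k are ℚ-combinations of u and τ • u
  have hkey : ∀ v, v ∈ W → v ∈ L → ∃ a b : ℚ, v = a • u + b • (τ • u) := by
    intro v hvW hvL
    obtain ⟨cc, rfl⟩ := Submodule.mem_span_singleton.mp hvL
    have huW : u ∈ W := hVW huV
    have hcase : u.1 ≠ 0 ∨ u.2 ≠ 0 := by
      by_contra h
      push_neg at h
      exact hu0 (Prod.ext h.1 h.2)
    have hc : ∃ a b : ℚ, cc = (a : ℂ) + (b : ℂ) * τ := by
      rcases hcase with h | h
      · have h1 : ∃ a b : ℚ, cc * u.1 = (a:ℂ) + (b:ℂ)*τ := by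
          have := hvW.1
          rwa [Prod.smul_fst, smul_eq_mul] at this
        have h2 := aux_inK_inv n hn τ hτ u.1 h huW.1
        have h3 := aux_inK_mul n τ hτ2 _ _ h1 h2
        rwa [mul_assoc, mul_inv_cancel₀ h, mul_one] at h3
      · have h1 : ∃ a b : ℚ, cc * u.2 = (a:ℂ) + (b:ℂ)*τ := by
          have := hvW.2
          rwa [Prod.smul_snd, smul_eq_mul] at this
        have h2 := aux_inK_inv n hn τ hτ u.2 h huW.2
        have h3 := aux_inK_mul n τ hτ2 _ _ h1 h2
        rwa [mul_assoc, mul_inv_cancel₀ h, mul_one] at h3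
    obtain ⟨a, b, rfl⟩ := hc
    refine ⟨a, b, ?_⟩
    rw [← hQsmul, ← hQsmul, smul_smul, ← add_smul]
  -- u and τ • u are ℚ-independent
  have hli : LinearIndependent ℚ ![u, τ • u] := by
    rw [LinearIndependent.pair_iff]
    intro s t hst
    have h1 : ((s:ℂ) + (t:ℂ) * τ) • u = 0 := by
      rw [add_smul, mul_smul, hQsmul, hQsmul]
      exact hst
    rcases smul_eq_zero.mp h1 with h | h
    · exact hindep s t h
    · exact absurd h hu0
  have hrangepair : Set.range ![u, τ • u] = {u, τ • u} := by
    simp [Matrix.range_cons, Matrix.range_empty, Set.pair_comm]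
  have hPrank : finrank ℚ (span ℚ ({u, τ • u} : Set (ℂ × ℂ))) = 2 := by
    rw [← hrangepair, finrank_span_eq_card hli]
    simp
  -- the sublattice N = Γ ∩ L
  set N : Submodule ℤ Γ := Submodule.comap ι (Submodule.restrictScalars ℤ L) with hN
  have hmemN : ∀ x : Γ, x ∈ N ↔ (x : ℂ × ℂ) ∈ L := fun x => Iff.rfl
  obtain ⟨m, bN⟩ := Submodule.basisOfPid b N
  set w : Fin m → ℂ × ℂ := fun i => ((bN i : Γ) : ℂ × ℂ) with hw
  have hwΓ : ∀ i, w i ∈ Γ := fun i => ((bN i : Γ)).2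
  have hwL : ∀ i, w i ∈ L := fun i => (bN i).2
  have hwindZ : LinearIndependent ℤ w := by
    have h2 : Function.Injective (ι.comp (N.subtype)) := by
      intro x y hxy
      exact Subtype.val_injective (hιinj hxy)
    have := bN.linearIndependent.map' (ι.comp (N.subtype)) (LinearMap.ker_eq_bot.mpr h2)
    exact this
  have hwindQ : LinearIndependent ℚ w := by
    rw [← LinearIndependent.iff_fractionRing ℤ ℚ]; exact hwindZ
  -- span of w is exactly the plane spanned by u and τ • u
  have hspanw : span ℚ (Set.range w) = span ℚ ({u, τ • u} : Set (ℂ × ℂ)) := by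
    apply le_antisymm
    · rw [span_le]
      rintro x ⟨i, rfl⟩
      obtain ⟨a, b, hab⟩ := hkey (w i) (hΓW _ (hwΓ i)) (hwL i)
      rw [hab]
      exact add_mem (smul_mem _ _ (subset_span (by simp)))
        (smul_mem _ _ (subset_span (by simp)))
    · rw [span_le]
      intro z hz
      have hzV : z ∈ V := by
        rcases hz with rfl | hz
        · exact huV
        · rw [Set.mem_singleton_iff] at hz; rw [hz]; exact huτV
      have hzL : z ∈ L := by
        rcases hz with rfl | hz
        · exact huL
        · rw [Set.mem_singleton_iff] at hz; rw [hz]; exact hτuL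
      obtain ⟨c, hc0, hcΓ⟩ := hVscale z hzV
      have hcL : c • z ∈ L := by
        rw [← hZsmul]
        exact L.smul_mem _ hzL
      have hxN : (⟨⟨c • z, hcΓ⟩, hcL⟩ : N) ∈ (⊤ : Submodule ℤ N) := trivial
      have hcz : c • z ∈ span ℚ (Set.range w) := by
        have hrg : Set.range w = (ι.comp (N.subtype)) '' Set.range bN := by
          rw [← Set.range_comp]; rfl
        have h1 : c • z ∈ span ℤ (Set.range w) := by
          rw [hrg, ← Submodule.map_span, bN.span_eq]
          exact ⟨⟨⟨c • z, hcΓ⟩, hcL⟩, trivial, rfl⟩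
        exact Submodule.span_subset_span ℤ ℚ _ h1
      have hccast : ((c:ℚ)) ≠ 0 := by exact_mod_cast hc0
      have : z = (c:ℚ)⁻¹ • (c • z) := by
        rw [← hZQsmul, inv_smul_smul₀ hccast]
      rw [this]
      exact Submodule.smul_mem _ _ hcz
  have hm : m = 2 := by
    have h1 : finrank ℚ (span ℚ (Set.range w)) = m := by
      rw [finrank_span_eq_card hwindQ]; simp
    rw [hspanw, hPrank] at h1
    omega
  subst hm
  -- the subgroup L ⊓ Γ and its basis
  have hLG : ∀ x : ℂ × ℂ, x ∈ L.toAddSubgroup ⊓ Γ ↔ x ∈ L ∧ x ∈ Γ := by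
    intro x
    rw [AddSubgroup.mem_inf]
    exact Iff.rfl
  set e : N ≃+ (L.toAddSubgroup ⊓ Γ : AddSubgroup (ℂ × ℂ)) :=
  { toFun := fun x => ⟨((x : Γ) : ℂ × ℂ), (hLG _).mpr ⟨x.2, (x : Γ).2⟩⟩
    invFun := fun y => ⟨⟨(y : ℂ × ℂ), ((hLG _).mp y.2).2⟩, ((hLG _).mp y.2).1⟩
    left_inv := fun x => Subtype.ext (Subtype.ext rfl)
    right_inv := fun y => Subtype.ext rfl
    map_add' := fun x y => Subtype.ext rfl } with he
  have hbasis : Nonempty (Basis (Fin 2) ℤ ((L.toAddSubgroup ⊓ Γ : AddSubgroup (ℂ × ℂ)))) :=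
    ⟨bN.map e.toIntLinearEquiv⟩
  -- saturation of N and the splitting
  have hNsat : ∀ (c : ℤ) (x : Γ), c ≠ 0 → c • x ∈ N → x ∈ N := by
    intro c x hc hcx
    have h1 : ((c • x : Γ) : ℂ × ℂ) ∈ L := hcx
    have h2 : (c : ℂ) • (x : ℂ × ℂ) ∈ L := by
      rw [hZsmul]
      simpa using h1
    have h3 := L.smul_mem ((c:ℂ))⁻¹ h2
    rw [inv_smul_smul₀ (by exact_mod_cast hc : ((c:ℂ)) ≠ 0)] at h3
    exact h3
  obtain ⟨γ₀', hsplit⟩ := aux_split b N bN hNsat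
  refine ⟨L, ((γ₀' : Γ) : ℂ × ℂ), hLrank, (γ₀' : Γ).2, hbasis, ?_, ?_⟩
  · -- the unique decomposition
    intro γ hγ
    obtain ⟨⟨p, mm⟩, hpm, huniq⟩ := hsplit ⟨γ, hγ⟩
    simp only at hpm
    refine ⟨(e p, mm), ?_, ?_⟩
    · have := congrArg (fun x : Γ => (x : ℂ × ℂ)) hpm
      exact (by simpa using this : ((p : Γ) : ℂ × ℂ) + mm • ((γ₀' : Γ) : ℂ × ℂ) = γ)
    · rintro ⟨p', mm'⟩ hpm'
      simp only at hpm'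
      have hp'L : (p' : ℂ × ℂ) ∈ L := ((hLG _).mp p'.2).1
      have hp'Γ : (p' : ℂ × ℂ) ∈ Γ := ((hLG _).mp p'.2).2
      have h1 : ((⟨⟨(p' : ℂ × ℂ), hp'Γ⟩, hp'L⟩ : N) : Γ) + mm' • γ₀' = (⟨γ, hγ⟩ : Γ) := by
        apply Subtype.ext
        simpa using hpm'
      have h2 := huniq (⟨⟨(p' : ℂ × ℂ), hp'Γ⟩, hp'L⟩, mm') h1
      have hfst := congrArg Prod.fst h2
      have hsnd := congrArg Prod.snd h2
      simp only at hfst hsnd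
      refine Prod.ext ?_ hsnd
      apply Subtype.ext
      show (p' : ℂ × ℂ) = ((e p : (L.toAddSubgroup ⊓ Γ : AddSubgroup (ℂ × ℂ))) : ℂ × ℂ)
      have := congrArg (fun x : N => ((x : Γ) : ℂ × ℂ)) hfst
      simpa [he] using this
  · -- the isogeny statement
    intro φ
    set uL : L := ⟨u, huL⟩ with huLdef
    have hφu : φ uL ≠ 0 := by
      intro h
      have h2 : uL = 0 := by
        apply φ.injective
        rw [map_zero]
        exact h
      exact hu0 (by simpa [huLdef, Subtype.ext_iff] using h2)
    obtain ⟨a0, b0, hab0⟩ := hkey (w 0) (hΓW _ (hwΓ 0)) (hwL 0)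
    obtain ⟨a1, b1, hab1⟩ := hkey (w 1) (hΓW _ (hwΓ 1)) (hwL 1)
    set d : ℤ := (a0.den : ℤ) * (b0.den : ℤ) * (a1.den : ℤ) * (b1.den : ℤ) with hd
    have hd0 : (d : ℂ) ≠ 0 := by
      have : 0 < d := by positivity
      exact_mod_cast this.ne'
    refine ⟨(d : ℂ) / φ uL, div_ne_zero hd0 hφu, ?_⟩
    intro v hvΓ
    -- v is an integer combination of w 0 and w 1
    have hx : ∃ c : Fin 2 → ℤ, (v : ℂ × ℂ) = c 0 • w 0 + c 1 • w 1 := by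
      set x : N := ⟨⟨(v : ℂ × ℂ), hvΓ⟩, v.2⟩ with hxdef
      refine ⟨fun i => bN.repr x i, ?_⟩
      have hrepr := bN.sum_repr x
      have h2 := congrArg (ι.comp (N.subtype)) hrepr
      rw [map_sum] at h2
      simp only [map_zsmul] at h2
      rw [Fin.sum_univ_two] at h2
      exact h2.symm
    obtain ⟨c, hc⟩ := hx
    -- compute φ v
    have hwiL : ∀ i : Fin 2, ((a0 : ℂ) + (b0 : ℂ) * τ) • u = w 0 ∧
        ((a1 : ℂ) + (b1 : ℂ) * τ) • u = w 1 := by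
      intro i
      constructor
      · rw [hab0, ← hQsmul, ← hQsmul, smul_smul, ← add_smul]
      · rw [hab1, ← hQsmul, ← hQsmul, smul_smul, ← add_smul]
    obtain ⟨hw0, hw1⟩ := hwiL 0
    have hvL2 : (v : L) = (c 0 : ℂ) • (((a0 : ℂ) + (b0 : ℂ) * τ) • uL)
        + (c 1 : ℂ) • (((a1 : ℂ) + (b1 : ℂ) * τ) • uL) := by
      apply Subtype.ext
      show (v : ℂ × ℂ) = (c 0 : ℂ) • (((a0 : ℂ) + (b0 : ℂ) * τ) • u)
        + (c 1 : ℂ) • (((a1 : ℂ) + (b1 : ℂ) * τ) • u)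
      rw [hw0, hw1, hc, hZsmul, hZsmul]
    have hφv : φ v = ((c 0 : ℂ) * ((a0 : ℂ) + (b0 : ℂ) * τ)
        + (c 1 : ℂ) * ((a1 : ℂ) + (b1 : ℂ) * τ)) * φ uL := by
      rw [hvL2]
      simp only [map_add, map_smul, smul_eq_mul]
      ring
    -- clear denominators
    have hA0 : ∃ z : ℤ, ((z : ℚ)) = (d : ℚ) * a0 := by
      refine ⟨a0.num * ((b0.den : ℤ) * (a1.den : ℤ) * (b1.den : ℤ)), ?_⟩
      have h0 := Rat.mul_den_eq_num a0
      push_cast [hd]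
      linear_combination (-(((b0.den : ℚ)) * ((a1.den : ℚ)) * ((b1.den : ℚ)))) * h0
    have hB0 : ∃ z : ℤ, ((z : ℚ)) = (d : ℚ) * b0 := by
      refine ⟨b0.num * ((a0.den : ℤ) * (a1.den : ℤ) * (b1.den : ℤ)), ?_⟩
      have h0 := Rat.mul_den_eq_num b0
      push_cast [hd]
      linear_combination (-(((a0.den : ℚ)) * ((a1.den : ℚ)) * ((b1.den : ℚ)))) * h0
    have hA1 : ∃ z : ℤ, ((z : ℚ)) = (d : ℚ) * a1 := by
      refine ⟨a1.num * ((a0.den : ℤ) * (b0.den : ℤ) * (b1.den : ℤ)), ?_⟩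
      have h0 := Rat.mul_den_eq_num a1
      push_cast [hd]
      linear_combination (-(((a0.den : ℚ)) * ((b0.den : ℚ)) * ((b1.den : ℚ)))) * h0
    have hB1 : ∃ z : ℤ, ((z : ℚ)) = (d : ℚ) * b1 := by
      refine ⟨b1.num * ((a0.den : ℤ) * (b0.den : ℤ) * (a1.den : ℤ)), ?_⟩
      have h0 := Rat.mul_den_eq_num b1
      push_cast [hd]
      linear_combination (-(((a0.den : ℚ)) * ((b0.den : ℚ)) * ((a1.den : ℚ)))) * h0
    obtain ⟨zA0, hzA0⟩ := hA0
    obtain ⟨zB0, hzB0⟩ := hB0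
    obtain ⟨zA1, hzA1⟩ := hA1
    obtain ⟨zB1, hzB1⟩ := hB1
    have hzA0C : ((zA0 : ℂ)) = (d : ℂ) * (a0 : ℂ) := by exact_mod_cast hzA0
    have hzB0C : ((zB0 : ℂ)) = (d : ℂ) * (b0 : ℂ) := by exact_mod_cast hzB0
    have hzA1C : ((zA1 : ℂ)) = (d : ℂ) * (a1 : ℂ) := by exact_mod_cast hzA1
    have hzB1C : ((zB1 : ℂ)) = (d : ℂ) * (b1 : ℂ) := by exact_mod_cast hzB1
    refine ⟨c 0 * zA0 + c 1 * zA1, c 0 * zB0 + c 1 * zB1, ?_⟩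
    have key : (d:ℂ) / φ uL * (((c 0 : ℂ) * ((a0 : ℂ) + (b0 : ℂ) * τ)
        + (c 1 : ℂ) * ((a1 : ℂ) + (b1 : ℂ) * τ)) * φ uL)
        = (d:ℂ) * ((c 0 : ℂ) * ((a0 : ℂ) + (b0 : ℂ) * τ)
        + (c 1 : ℂ) * ((a1 : ℂ) + (b1 : ℂ) * τ)) := by
      field_simp
    rw [hφv, key]
    push_cast
    linear_combination (-((c 0 : ℂ))) * hzA0C + (-((c 1 : ℂ))) * hzA1C
      + (-((c 0 : ℂ)) * τ) * hzB0C + (-((c 1 : ℂ)) * τ) * hzB1C
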